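/- Define Φ(x) = Θ(x)^{-1} W(x) where Θ is invertible on an interval. Then Φ satisfies the coupled nonlinear system Φ'' + 2(⟨Φ, E⟩)'Φ + K²Φ = 0, where ⟨Φ, E⟩(x) = ∑_m Φ_m(x)E_m(x) and K = diag(mπ). Consequently, the function ψ(x) = U(x) - ⟨V(x), Θ(x)^{-1}W(x)⟩, with U'' = -Z²U and V_m = (U E_m' - U' E_m)/(Z² - m²π²), satisfies the Schrödinger equation -ψ'' - 2(⟨E,Φ⟩)' ψ = Z² ψ. -/

import Mathlib

open Matrix

private lemma contDiff_two_aux {f f' f'' : ℝ → ℂ}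
    (h1 : ∀ x, HasDerivAt f (f' x) x) (h2 : ∀ x, HasDerivAt f' (f'' x) x)
    (hc : Continuous f'') : ContDiff ℝ 2 f := by
  have hd1 : deriv f = f' := funext fun x => (h1 x).deriv
  have hd2 : deriv f' = f'' := funext fun x => (h2 x).deriv
  rw [show (2 : WithTop ℕ∞) = 1 + 1 from rfl, contDiff_succ_iff_deriv]
  refine ⟨fun x => (h1 x).differentiableAt, by simp, ?_⟩
  rw [hd1, contDiff_one_iff_deriv, hd2]
  exact ⟨fun x => (h2 x).differentiableAt, hc⟩

private lemma contDiff_prod_aux {ι : Type*} (s : Finset ι) (f : ι → ℝ → ℂ)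
    (h : ∀ i, ContDiff ℝ 2 (f i)) : ContDiff ℝ 2 (fun y => ∏ i ∈ s, f i y) := by
  classical
  induction s using Finset.induction_on with
  | empty => simpa using contDiff_const
  | insert _ _ hi ih =>
      simp only [Finset.prod_insert hi]
      exact (h _).mul ih

private lemma contDiff_det_aux {n : ℕ} (M : ℝ → Matrix (Fin n) (Fin n) ℂ)
    (h : ∀ i j, ContDiff ℝ 2 (fun y => M y i j)) :
    ContDiff ℝ 2 (fun y => (M y).det) := by
  simp only [Matrix.det_apply']
  exact ContDiff.sum fun σ _ => contDiff_const.mul (contDiff_prod_aux _ _ fun i => h _ _)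

private lemma derivAux {f : ℝ → ℂ} {x : ℝ} (h : ContDiffAt ℝ 2 f x) :
    DifferentiableAt ℝ (deriv f) x := by
  obtain ⟨u, hu, hcd⟩ := h.contDiffOn le_rfl (by simp)
  obtain ⟨v, hv, hvo, hxv⟩ := mem_nhds_iff.mp hu
  have h2 : ContDiffOn ℝ 1 (deriv f) v := (hcd.mono hv).deriv_of_isOpen hvo (by norm_num)
  exact (h2.differentiableOn (by norm_num)).differentiableAt (hvo.mem_nhds hxv)

/-- With Θ invertible on an open interval I, define
Φ(x) = Θ(x)⁻¹ W(x). Then Φ satisfies Φ'' + 2(⟨Φ,E⟩)'Φ + K²Φ = 0, and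
consequently ψ(x) = U(x) - ⟨V(x), Θ(x)⁻¹W(x)⟩, with U'' = -Z²U and
V_m = (U E_m' - U' E_m)/(Z² - m²π²), satisfies -ψ'' - 2(⟨E,Φ⟩)'ψ = Z²ψ.
Here the indices m correspond to the positive integers m+1, m : Fin n, and
E_m(x) = 2(m+1)π sin((m+1)πx), K = diag((m+1)π). -/
theorem stmt19 (n : ℕ) (Z : Fin n → ℂ) (Zs : ℂ)
    (W : Fin n → ℝ → ℂ) (U : ℝ → ℂ) (E : Fin n → ℝ → ℂ)
    (hE : ∀ (m : Fin n) (x : ℝ),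
      E m x = ((2 * (((m : ℕ) : ℝ) + 1) * Real.pi *
        Real.sin ((((m : ℕ) : ℝ) + 1) * Real.pi * x) : ℝ) : ℂ))
    (hWdiff : ∀ k, Differentiable ℝ (W k))
    (hWdiff' : ∀ k, Differentiable ℝ (deriv (W k)))
    (hW : ∀ k x, deriv (deriv (W k)) x = -(Z k ^ 2) * W k x)
    (hUdiff : Differentiable ℝ U) (hUdiff' : Differentiable ℝ (deriv U))
    (hU : ∀ x, deriv (deriv U) x = -(Zs ^ 2) * U x)
    (hZm : ∀ (k m : Fin n),
      Z k ^ 2 ≠ ((((m : ℕ) : ℂ) + 1)) ^ 2 * (Real.pi : ℂ) ^ 2)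
    (hZsm : ∀ m : Fin n, Zs ^ 2 ≠ ((((m : ℕ) : ℂ) + 1)) ^ 2 * (Real.pi : ℂ) ^ 2)
    (Θ : ℝ → Matrix (Fin n) (Fin n) ℂ)
    (hΘ : ∀ (x : ℝ) (k m : Fin n),
      Θ x k m = (W k x * deriv (E m) x - deriv (W k) x * E m x) /
        (Z k ^ 2 - ((((m : ℕ) : ℂ) + 1)) ^ 2 * (Real.pi : ℂ) ^ 2))
    (I : Set ℝ) (hI : IsOpen I)
    (hdet : ∀ x ∈ I, IsUnit (Θ x).det)
    (Φ : ℝ → Fin n → ℂ)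
    (hΦ : ∀ x : ℝ, Φ x = (Θ x)⁻¹ *ᵥ (fun k => W k x))
    (ψ : ℝ → ℂ)
    (hψ : ∀ x : ℝ,
      ψ x = U x - ∑ m : Fin n,
        ((U x * deriv (E m) x - deriv U x * E m x) /
          (Zs ^ 2 - ((((m : ℕ) : ℂ) + 1)) ^ 2 * (Real.pi : ℂ) ^ 2)) * Φ x m) :
    (∀ m : Fin n, ∀ x ∈ I,
      deriv (deriv (fun y => Φ y m)) x +
        2 * deriv (fun y => ∑ p : Fin n, Φ y p * E p y) x * Φ x m +
        ((((m : ℕ) : ℂ) + 1)) ^ 2 * (Real.pi : ℂ) ^ 2 * Φ x m = 0) ∧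
    (∀ x ∈ I,
      -(deriv (deriv ψ) x) -
        2 * deriv (fun y => ∑ p : Fin n, E p y * Φ y p) x * ψ x = Zs ^ 2 * ψ x) := by
  set cc : Fin n → ℂ := fun m => ((((m : ℕ) : ℂ) + 1)) ^ 2 * (Real.pi : ℂ) ^ 2 with hccdef
  set Ed : Fin n → ℝ → ℂ := fun m x =>
    ((2 * (((m : ℕ) : ℝ) + 1) * Real.pi * ((((m : ℕ) : ℝ) + 1) * Real.pi) *
      Real.cos ((((m : ℕ) : ℝ) + 1) * Real.pi * x) : ℝ) : ℂ) with hEddef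
  -- derivatives of E
  have hlin : ∀ (m : Fin n) (x : ℝ), HasDerivAt (fun y : ℝ => (((m : ℕ) : ℝ) + 1) * Real.pi * y)
      ((((m : ℕ) : ℝ) + 1) * Real.pi) x := by
    intro m x
    simpa using (hasDerivAt_id x).const_mul ((((m : ℕ) : ℝ) + 1) * Real.pi)
  have hE1 : ∀ m x, HasDerivAt (E m) (Ed m x) x := by
    intro m x
    have h0 : HasDerivAt (fun y : ℝ => 2 * (((m : ℕ) : ℝ) + 1) * Real.pi *
        Real.sin ((((m : ℕ) : ℝ) + 1) * Real.pi * y))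
        (Real.cos ((((m : ℕ) : ℝ) + 1) * Real.pi * x) * ((((m : ℕ) : ℝ) + 1) * Real.pi) *
          (2 * (((m : ℕ) : ℝ) + 1) * Real.pi)) x :=
      (((Real.hasDerivAt_sin _).comp x (hlin m x))).const_mul _ |>.congr_deriv (by ring)
    have h1 := h0.ofReal_comp (z := x)
    have hfun : E m = fun y : ℝ => ((2 * (((m : ℕ) : ℝ) + 1) * Real.pi *
        Real.sin ((((m : ℕ) : ℝ) + 1) * Real.pi * y) : ℝ) : ℂ) := funext (hE m)
    rw [hfun, hEddef]
    convert h1 using 1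
    push_cast
    ring
  have hEd : ∀ m, deriv (E m) = Ed m := fun m => funext fun x => (hE1 m x).deriv
  have hE2 : ∀ m x, HasDerivAt (Ed m) (-(cc m) * E m x) x := by
    intro m x
    have h0 : HasDerivAt (fun y : ℝ => 2 * (((m : ℕ) : ℝ) + 1) * Real.pi *
        ((((m : ℕ) : ℝ) + 1) * Real.pi) * Real.cos ((((m : ℕ) : ℝ) + 1) * Real.pi * y))
        (-Real.sin ((((m : ℕ) : ℝ) + 1) * Real.pi * x) * ((((m : ℕ) : ℝ) + 1) * Real.pi) *
          (2 * (((m : ℕ) : ℝ) + 1) * Real.pi * ((((m : ℕ) : ℝ) + 1) * Real.pi))) x :=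
      (((Real.hasDerivAt_cos _).comp x (hlin m x))).const_mul _ |>.congr_deriv (by ring)
    have h1 := h0.ofReal_comp (z := x)
    rw [hEddef]
    convert h1 using 1
    rw [hE m x, hccdef]
    push_cast
    ring
  have hccne : ∀ k m, Z k ^ 2 - cc m ≠ 0 := fun k m => sub_ne_zero.mpr (hZm k m)
  have hccsne : ∀ m, Zs ^ 2 - cc m ≠ 0 := fun m => sub_ne_zero.mpr (hZsm m)
  have hΘ' : ∀ (x : ℝ) (k m : Fin n),
      Θ x k m = (W k x * Ed m x - deriv (W k) x * E m x) / (Z k ^ 2 - cc m) := by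
    intro x k m
    rw [hΘ x k m, hEd m]
  -- basic derivative facts for W and U
  have hW1 : ∀ k x, HasDerivAt (W k) (deriv (W k) x) x := fun k x => (hWdiff k x).hasDerivAt
  have hW2 : ∀ k x, HasDerivAt (deriv (W k)) (-(Z k ^ 2) * W k x) x := by
    intro k x
    have h := (hWdiff' k x).hasDerivAt
    rwa [hW] at h
  have hU1 : ∀ x, HasDerivAt U (deriv U x) x := fun x => (hUdiff x).hasDerivAt
  have hU2 : ∀ x, HasDerivAt (deriv U) (-(Zs ^ 2) * U x) x := by
    intro x
    have h := (hUdiff' x).hasDerivAt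
    rwa [hU] at h
  -- ContDiff facts
  have cE : ∀ m, ContDiff ℝ 2 (E m) := fun m =>
    contDiff_two_aux (hE1 m) (hE2 m)
      (continuous_const.mul (Differentiable.continuous fun x => (hE1 m x).differentiableAt))
  have cEd : ∀ m, ContDiff ℝ 2 (Ed m) := fun m =>
    contDiff_two_aux (hE2 m) (fun x => (hE1 m x).const_mul (-(cc m)))
      (continuous_const.mul (Differentiable.continuous fun x => (hE2 m x).differentiableAt))
  have cW : ∀ k, ContDiff ℝ 2 (W k) := fun k =>
    contDiff_two_aux (hW1 k) (hW2 k) (continuous_const.mul (hWdiff k).continuous)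
  have cW' : ∀ k, ContDiff ℝ 2 (deriv (W k)) := fun k =>
    contDiff_two_aux (hW2 k) (fun x => (hW1 k x).const_mul (-(Z k ^ 2)))
      (continuous_const.mul (hWdiff' k).continuous)
  have cU : ContDiff ℝ 2 U :=
    contDiff_two_aux hU1 hU2 (continuous_const.mul hUdiff.continuous)
  have cU' : ContDiff ℝ 2 (deriv U) :=
    contDiff_two_aux hU2 (fun x => (hU1 x).const_mul (-(Zs ^ 2)))
      (continuous_const.mul hUdiff'.continuous)
  -- Θ entries
  have hΘfun : ∀ k m, (fun y => Θ y k m) =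
      fun y => (W k y * Ed m y - deriv (W k) y * E m y) / (Z k ^ 2 - cc m) :=
    fun k m => funext fun y => hΘ' y k m
  have hΘd : ∀ k m x, HasDerivAt (fun y => Θ y k m) (W k x * E m x) x := by
    intro k m x
    rw [hΘfun]
    have h := (((hW1 k x).fun_mul (hE2 m x)).fun_sub ((hW2 k x).fun_mul (hE1 m x))).div_const
      (Z k ^ 2 - cc m)
    refine h.congr_deriv ?_
    rw [div_eq_iff (hccne k m)]
    ring
  have cΘ : ∀ k m, ContDiff ℝ 2 (fun y => Θ y k m) := by
    intro k m
    rw [hΘfun]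
    exact (((cW k).mul (cEd m)).sub ((cW' k).mul (cE m))).div_const _
  -- Φ expansion and smoothness
  have hΦexp : ∀ m, (fun y => Φ y m) =
      fun y => ((Θ y).det)⁻¹ * ∑ j, (Θ y).adjugate m j * W j y := by
    intro m
    funext y
    have h := congrFun (hΦ y) m
    simp only [Matrix.inv_def, Matrix.smul_mulVec, Matrix.mulVec, dotProduct,
      Ring.inverse_eq_inv', Pi.smul_apply, smul_eq_mul] at h
    rw [h, Finset.mul_sum]
    exact Finset.sum_congr rfl fun j _ => by simp [Matrix.smul_apply, smul_eq_mul, mul_assoc]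
  have cΦ : ∀ (m : Fin n) (x : ℝ), x ∈ I → ContDiffAt ℝ 2 (fun y => Φ y m) x := by
    intro m x hx
    rw [hΦexp m]
    have hdet0 : (Θ x).det ≠ 0 := (hdet x hx).ne_zero
    have cdet : ContDiff ℝ 2 (fun y => (Θ y).det) := contDiff_det_aux Θ cΘ
    have cadj : ∀ i j, ContDiff ℝ 2 (fun y => (Θ y).adjugate i j) := by
      intro i j
      have hadj : (fun y => (Θ y).adjugate i j) =
          fun y => ((Θ y).updateRow j (Pi.single i 1)).det :=
        funext fun y => Matrix.adjugate_apply _ _ _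
      rw [hadj]
      refine contDiff_det_aux _ fun a b => ?_
      rcases eq_or_ne a j with rfl | hne
      · simp only [Matrix.updateRow_self]
        exact contDiff_const
      · simp only [Matrix.updateRow_ne hne]
        exact cΘ a b
    exact ((cdet.contDiffAt).inv hdet0).mul
      (ContDiff.sum fun j _ => (cadj m j).mul (cW j)).contDiffAt
  have hPdiff : ∀ (m : Fin n) (x : ℝ), x ∈ I → DifferentiableAt ℝ (fun y => Φ y m) x :=
    fun m x hx => (cΦ m x hx).differentiableAt (by norm_num)
  have hPd2 : ∀ (m : Fin n) (x : ℝ), x ∈ I →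
      DifferentiableAt ℝ (deriv (fun y => Φ y m)) x :=
    fun m x hx => derivAux (cΦ m x hx)
  -- the basic identity  Θ Φ = W  on I
  have hIdent : ∀ y ∈ I, ∀ k, ∑ m, Θ y k m * Φ y m = W k y := by
    intro y hy k
    have h1 : Θ y *ᵥ Φ y = fun k => W k y := by
      rw [hΦ y, Matrix.mulVec_mulVec, Matrix.mul_nonsing_inv _ (hdet y hy), Matrix.one_mulVec]
    have h2 := congrFun h1 k
    simpa [Matrix.mulVec, dotProduct] using h2
  -- first derivative of the identity
  have hA : ∀ x ∈ I, ∀ k, ∑ m, (W k x * E m x * Φ x m +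
      Θ x k m * deriv (fun y => Φ y m) x) = deriv (W k) x := by
    intro x hx k
    have hF : HasDerivAt (fun y => ∑ m, Θ y k m * Φ y m)
        (∑ m, (W k x * E m x * Φ x m + Θ x k m * deriv (fun y => Φ y m) x)) x :=
      HasDerivAt.fun_sum fun m _ => (hΘd k m x).mul ((hPdiff m x hx).hasDerivAt)
    have hev : W k =ᶠ[nhds x] (fun y => ∑ m, Θ y k m * Φ y m) :=
      Filter.eventuallyEq_of_mem (hI.mem_nhds hx) (fun y hy => (hIdent y hy k).symm)
    exact ((hF.congr_of_eventuallyEq hev).deriv).symm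
  -- second derivative of the identity
  have hB : ∀ x ∈ I, ∀ k, ∑ m, ((deriv (W k) x * E m x + W k x * Ed m x) * Φ x m +
      2 * (W k x * E m x) * deriv (fun y => Φ y m) x +
      Θ x k m * deriv (deriv (fun y => Φ y m)) x) = -(Z k ^ 2) * W k x := by
    intro x hx k
    have hG : HasDerivAt (fun y => ∑ m, (W k y * E m y * Φ y m +
        Θ y k m * deriv (fun y' => Φ y' m) y))
        (∑ m, ((deriv (W k) x * E m x + W k x * Ed m x) * Φ x m +
          2 * (W k x * E m x) * deriv (fun y => Φ y m) x +
          Θ x k m * deriv (deriv (fun y => Φ y m)) x)) x := by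
      refine HasDerivAt.fun_sum fun m _ => ?_
      have ht := (((hW1 k x).fun_mul (hE1 m x)).fun_mul ((hPdiff m x hx).hasDerivAt)).fun_add
        ((hΘd k m x).fun_mul ((hPd2 m x hx).hasDerivAt))
      convert ht using 1
      ring
    have hev : deriv (W k) =ᶠ[nhds x] (fun y => ∑ m, (W k y * E m y * Φ y m +
        Θ y k m * deriv (fun y' => Φ y' m) y)) :=
      Filter.eventuallyEq_of_mem (hI.mem_nhds hx) (fun y hy => (hA y hy k).symm)
    exact (hG.congr_of_eventuallyEq hev).unique (hW2 k x)
  -- Part 1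
  have key1 : ∀ x ∈ I, ∀ m : Fin n,
      deriv (deriv (fun y => Φ y m)) x +
        2 * deriv (fun y => ∑ p : Fin n, Φ y p * E p y) x * Φ x m +
        cc m * Φ x m = 0 := by
    intro x hx
    have hSd : HasDerivAt (fun y => ∑ p : Fin n, Φ y p * E p y)
        (∑ p, (deriv (fun y => Φ y p) x * E p x + Φ x p * Ed p x)) x :=
      HasDerivAt.fun_sum fun p _ => ((hPdiff p x hx).hasDerivAt).mul (hE1 p x)
    set S := ∑ p, (deriv (fun y => Φ y p) x * E p x + Φ x p * Ed p x) with hSdef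
    have hSeq : deriv (fun y => ∑ p : Fin n, Φ y p * E p y) x = S := hSd.deriv
    set v : Fin n → ℂ := fun m => deriv (deriv (fun y => Φ y m)) x + 2 * S * Φ x m +
      cc m * Φ x m with hvdef
    have hvz : ∀ k, ∑ m, Θ x k m * v m = 0 := by
      intro k
      set A1 := ∑ m, E m x * Φ x m with hA1
      set A2 := ∑ m, Ed m x * Φ x m with hA2
      set A3 := ∑ m, E m x * deriv (fun y => Φ y m) x with hA3
      have hS' : S = A3 + A2 := by
        rw [hSdef, hA3, hA2, ← Finset.sum_add_distrib]
        exact Finset.sum_congr rfl fun m _ => by ring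
      have hC : ∑ m, Θ x k m * Φ x m = W k x := hIdent x hx k
      have hsplit : ∑ m, Θ x k m * v m =
          (∑ m, Θ x k m * deriv (deriv (fun y => Φ y m)) x) +
          2 * S * (∑ m, Θ x k m * Φ x m) + ∑ m, Θ x k m * cc m * Φ x m := by
        rw [Finset.mul_sum, ← Finset.sum_add_distrib, ← Finset.sum_add_distrib]
        exact Finset.sum_congr rfl fun m _ => by rw [hvdef]; ring
      have hnum : ∀ m : Fin n, Θ x k m * cc m * Φ x m =
          Z k ^ 2 * (Θ x k m * Φ x m) - W k x * (Ed m x * Φ x m) +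
            deriv (W k) x * (E m x * Φ x m) := by
        intro m
        have h0 : Θ x k m * (Z k ^ 2 - cc m) = W k x * Ed m x - deriv (W k) x * E m x := by
          rw [hΘ' x k m]
          exact div_mul_cancel₀ _ (hccne k m)
        linear_combination (-(Φ x m)) * h0
      have h3 : ∑ m, Θ x k m * cc m * Φ x m =
          Z k ^ 2 * (∑ m, Θ x k m * Φ x m) - W k x * A2 + deriv (W k) x * A1 := by
        rw [Finset.sum_congr rfl fun m _ => hnum m]
        rw [Finset.sum_add_distrib, Finset.sum_sub_distrib, ← Finset.mul_sum, ← Finset.mul_sum,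
          ← Finset.mul_sum, hA1, hA2]
      have hBk := hB x hx k
      have hB' : (∑ m, Θ x k m * deriv (deriv (fun y => Φ y m)) x) =
          -(Z k ^ 2) * W k x - deriv (W k) x * A1 - W k x * A2 - 2 * W k x * A3 := by
        have hre : ∑ m, ((deriv (W k) x * E m x + W k x * Ed m x) * Φ x m +
            2 * (W k x * E m x) * deriv (fun y => Φ y m) x +
            Θ x k m * deriv (deriv (fun y => Φ y m)) x) =
            deriv (W k) x * A1 + W k x * A2 + 2 * W k x * A3 +
            ∑ m, Θ x k m * deriv (deriv (fun y => Φ y m)) x := by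
          rw [hA1, hA2, hA3, Finset.mul_sum, Finset.mul_sum, Finset.mul_sum,
            ← Finset.sum_add_distrib, ← Finset.sum_add_distrib, ← Finset.sum_add_distrib]
          exact Finset.sum_congr rfl fun m _ => by ring
        rw [hre] at hBk
        linear_combination hBk
      rw [hsplit, hB', h3, hC, hS']
      ring
    have hmv : Θ x *ᵥ v = 0 := by
      funext k
      simpa [Matrix.mulVec, dotProduct] using hvz k
    have hv0 : v = 0 := by
      have h2 := congrArg (fun w => (Θ x)⁻¹ *ᵥ w) hmv
      simpa [Matrix.mulVec_mulVec, Matrix.nonsing_inv_mul _ (hdet x hx), Matrix.one_mulVec,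
        Matrix.mulVec_zero] using h2
    intro m
    have hm := congrFun hv0 m
    rw [hSeq]
    simpa [hvdef] using hm
  -- Part 2
  set vs : Fin n → ℝ → ℂ := fun m y =>
    (U y * Ed m y - deriv U y * E m y) / (Zs ^ 2 - cc m) with hvsdef
  have hψfun : ψ = fun y => U y - ∑ m, vs m y * Φ y m := by
    funext y
    rw [hψ y]
    simp only [hEd, hvsdef, hccdef]
  have hVd : ∀ m x, HasDerivAt (vs m) (U x * E m x) x := by
    intro m x
    have h := (((hU1 x).fun_mul (hE2 m x)).fun_sub ((hU2 x).fun_mul (hE1 m x))).div_const (Zs ^ 2 - cc m)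
    have hfun : vs m = fun y => (U y * Ed m y - deriv U y * E m y) / (Zs ^ 2 - cc m) := rfl
    rw [hfun]
    refine h.congr_deriv ?_
    rw [div_eq_iff (hccsne m)]
    ring
  have key2 : ∀ x ∈ I,
      -(deriv (deriv ψ) x) -
        2 * deriv (fun y => ∑ p : Fin n, E p y * Φ y p) x * ψ x = Zs ^ 2 * ψ x := by
    intro x hx
    have hswap : (fun y => ∑ p : Fin n, E p y * Φ y p) =
        (fun y => ∑ p : Fin n, Φ y p * E p y) :=
      funext fun y => Finset.sum_congr rfl fun p _ => mul_comm _ _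
    have hSd : HasDerivAt (fun y => ∑ p : Fin n, Φ y p * E p y)
        (∑ p, (deriv (fun y => Φ y p) x * E p x + Φ x p * Ed p x)) x :=
      HasDerivAt.fun_sum fun p _ => ((hPdiff p x hx).hasDerivAt).mul (hE1 p x)
    set S := ∑ p, (deriv (fun y => Φ y p) x * E p x + Φ x p * Ed p x) with hSdef
    have hSeq : deriv (fun y => ∑ p : Fin n, Φ y p * E p y) x = S := hSd.deriv
    have hψ1 : ∀ y ∈ I, HasDerivAt ψ
        (deriv U y - ∑ m, (U y * E m y * Φ y m + vs m y * deriv (fun t => Φ t m) y)) y := by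
      intro y hy
      rw [hψfun]
      exact (hU1 y).sub (HasDerivAt.fun_sum fun m _ => (hVd m y).mul ((hPdiff m y hy).hasDerivAt))
    have hgev : deriv ψ =ᶠ[nhds x] (fun y => deriv U y -
        ∑ m, (U y * E m y * Φ y m + vs m y * deriv (fun t => Φ t m) y)) :=
      Filter.eventuallyEq_of_mem (hI.mem_nhds hx) fun y hy => (hψ1 y hy).deriv
    have hgd : HasDerivAt (fun y => deriv U y -
        ∑ m, (U y * E m y * Φ y m + vs m y * deriv (fun t => Φ t m) y))
        (-(Zs ^ 2) * U x - ∑ m, ((deriv U x * E m x + U x * Ed m x) * Φ x m +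
          2 * (U x * E m x) * deriv (fun t => Φ t m) x +
          vs m x * deriv (deriv (fun t => Φ t m)) x)) x := by
      refine (hU2 x).sub (HasDerivAt.fun_sum fun m _ => ?_)
      have ht := (((hU1 x).fun_mul (hE1 m x)).fun_mul ((hPdiff m x hx).hasDerivAt)).fun_add
        ((hVd m x).fun_mul ((hPd2 m x hx).hasDerivAt))
      convert ht using 1
      ring
    have hd2ψ : deriv (deriv ψ) x = -(Zs ^ 2) * U x -
        ∑ m, ((deriv U x * E m x + U x * Ed m x) * Φ x m +
          2 * (U x * E m x) * deriv (fun t => Φ t m) x +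
          vs m x * deriv (deriv (fun t => Φ t m)) x) := by
      rw [Filter.EventuallyEq.deriv_eq hgev]
      exact hgd.deriv
    have hψx : ψ x = U x - ∑ m, vs m x * Φ x m := congrFun hψfun x
    set B1 := ∑ m, E m x * Φ x m with hB1
    set B2 := ∑ m, Ed m x * Φ x m with hB2
    set B3 := ∑ m, E m x * deriv (fun y => Φ y m) x with hB3
    set B4 := ∑ m, vs m x * Φ x m with hB4
    have hS' : S = B3 + B2 := by
      rw [hSdef, hB3, hB2, ← Finset.sum_add_distrib]
      exact Finset.sum_congr rfl fun m _ => by ring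
    have hsum2 : ∑ m, ((deriv U x * E m x + U x * Ed m x) * Φ x m +
        2 * (U x * E m x) * deriv (fun t => Φ t m) x +
        vs m x * deriv (deriv (fun t => Φ t m)) x) =
        deriv U x * B1 + U x * B2 + 2 * U x * B3 +
        (-(2 * S * B4) - (Zs ^ 2 * B4 - U x * B2 + deriv U x * B1)) := by
      have hterm : ∀ m : Fin n, (deriv U x * E m x + U x * Ed m x) * Φ x m +
          2 * (U x * E m x) * deriv (fun t => Φ t m) x +
          vs m x * deriv (deriv (fun t => Φ t m)) x =
          deriv U x * (E m x * Φ x m) + U x * (Ed m x * Φ x m) +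
          2 * U x * (E m x * deriv (fun t => Φ t m) x) +
          (-(2 * S * (vs m x * Φ x m)) - (Zs ^ 2 * (vs m x * Φ x m) -
            U x * (Ed m x * Φ x m) + deriv U x * (E m x * Φ x m))) := by
        intro m
        have hr := key1 x hx m
        rw [hSeq] at hr
        have hnum : vs m x * (Zs ^ 2 - cc m) = U x * Ed m x - deriv U x * E m x :=
          div_mul_cancel₀ _ (hccsne m)
        linear_combination vs m x * hr + Φ x m * hnum
      rw [Finset.sum_congr rfl fun m _ => hterm m]
      rw [hB1, hB2, hB3, hB4]
      simp only [Finset.sum_add_distrib, Finset.sum_sub_distrib, Finset.sum_neg_distrib,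
        ← Finset.mul_sum]
    rw [hswap, hSeq, hd2ψ, hsum2, hψx, hS']
    ring
  exact ⟨fun m x hx => key1 x hx m, key2⟩
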